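/- The control variate M^{(2)}_{Δ,T} := Σ_{j=1}^{J} Σ_{(U_1,U_2)∈𝒜} Σ_{o∈{1,2}^{U_1}} a_{j,o,U_1,U_2}(X_{Δ,(j−1)Δ}) ∏_{r∈U_1} H_{o_r}(ξ_j^r) ∏_{(k,l)∈U_2} V_j^{kl} satisfies Var[f(X_{Δ,T}) − M^{(2)}_{Δ,T}] = 0. -/

import Mathlib

open MeasureTheory ProbabilityTheory Finset

noncomputable section

/-- Map a boolean to `±1`. -/
def pm (b : Bool) : ℝ := if b then 1 else -1

/-- The index set `I_2 = {(k,l) : 1 ≤ k < l ≤ m}`. -/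
abbrev Upper (m : ℕ) := {p : Fin m × Fin m // p.1 < p.2}

/-- Law of a fair `±1` coin. -/
def coinLaw : Measure ℝ :=
  (1 / 2 : ENNReal) • Measure.dirac (1 : ℝ) + (1 / 2 : ENNReal) • Measure.dirac (-1 : ℝ)

/-- Law with `P(±√3) = 1/6`, `P(0) = 2/3`. -/
def xiLaw : Measure ℝ :=
  (1 / 6 : ENNReal) • Measure.dirac (Real.sqrt 3)
    + (1 / 6 : ENNReal) • Measure.dirac (-Real.sqrt 3)
    + (2 / 3 : ENNReal) • Measure.dirac (0 : ℝ)

/-- The three values `−√3, 0, √3`. -/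
def val3 : Fin 3 → ℝ := ![-Real.sqrt 3, 0, Real.sqrt 3]

/-- The normalized Hermite polynomial `H_2(x) = (x² − 1)/√2` (`H_1(x) = x`). -/
def H2 (t : ℝ) : ℝ := (t ^ 2 - 1) / Real.sqrt 2

/-- The antisymmetric matrix `z` built from upper-triangular `±1` entries, with
`z^{vu} = −z^{uv}` and `z^{uu} = −1`. -/
def zmat {m : ℕ} (b : Upper m → Bool) : Fin m → Fin m → ℝ := fun i l =>
  if h : i < l then pm (b ⟨(i, l), h⟩)
  else if h' : l < i then -pm (b ⟨(l, i), h'⟩)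
  else -1

/-- Backward recursion: `qB Φ f k = q_{J-k}`, i.e. `qB Φ f 0 = q_J = f` and
`q_{j-1}(x) = 2^{-m(m-1)/2} 6^{-m} Σ_y Σ_z 4^{#{i : yᵢ = 0}} q_j(Φ x y z)`. -/
def qB {d m : ℕ}
    (Φ : (Fin d → ℝ) → (Fin m → ℝ) → (Fin m → Fin m → ℝ) → Fin d → ℝ)
    (f : (Fin d → ℝ) → ℝ) : ℕ → (Fin d → ℝ) → ℝ
  | 0 => f
  | k + 1 => fun x =>
      ((2 : ℝ) ^ (m * (m - 1) / 2))⁻¹ * ((6 : ℝ) ^ m)⁻¹ *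
        ∑ y : Fin m → Fin 3, ∑ b : Upper m → Bool,
          (4 : ℝ) ^ ((Finset.univ.filter fun i => y i = 1).card) *
            qB Φ f k (Φ x (fun i => val3 (y i)) (zmat b))

/-- Coefficient `a_{j,o,U_1,U_2}` with `k = J - j`, where `o ∈ {1,2}^{U_1}` is encoded
by the subset `K_2 = {r ∈ U_1 : o_r = 2} ⊆ U_1` (so `𝒦_1 = U_1 \ K_2`):
`a(x) = 2^{-m(m-1)/2} 6^{-m} Σ_y Σ_z 4^{#{i : yᵢ = 0}} (Π_{r∈U_1} H_{o_r}(y^r))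
(Π_{(k,l)∈U_2} z^{kl}) q_j(Φ x y z)`. -/
def aB {d m : ℕ}
    (Φ : (Fin d → ℝ) → (Fin m → ℝ) → (Fin m → Fin m → ℝ) → Fin d → ℝ)
    (f : (Fin d → ℝ) → ℝ) (k : ℕ)
    (U1 K2 : Finset (Fin m)) (U2 : Finset (Upper m)) (x : Fin d → ℝ) : ℝ :=
  ((2 : ℝ) ^ (m * (m - 1) / 2))⁻¹ * ((6 : ℝ) ^ m)⁻¹ *
    ∑ y : Fin m → Fin 3, ∑ b : Upper m → Bool,
      (4 : ℝ) ^ ((Finset.univ.filter fun i => y i = 1).card) *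
        ((∏ r ∈ U1 \ K2, val3 (y r)) * (∏ r ∈ K2, H2 (val3 (y r))) *
          (∏ p ∈ U2, pm (b p)) * qB Φ f k (Φ x (fun i => val3 (y i)) (zmat b)))

/-- The second order discretisation scheme `X_{Δ,0} = x_0`,
`X_{Δ,jΔ} = Φ_Δ(X_{Δ,(j-1)Δ}, ξ_j, V_j)`. -/
def XB {d m : ℕ} {Ω : Type*}
    (Φ : (Fin d → ℝ) → (Fin m → ℝ) → (Fin m → Fin m → ℝ) → Fin d → ℝ)
    (x0 : Fin d → ℝ) (ξ : ℕ → Ω → Fin m → ℝ)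
    (V : ℕ → Ω → Fin m → Fin m → ℝ) : ℕ → Ω → Fin d → ℝ
  | 0 => fun _ => x0
  | j + 1 => fun ω => Φ (XB Φ x0 ξ V j ω) (ξ (j + 1) ω) (V (j + 1) ω)

/-- All scalar noise coordinates `ξ_j^i` and `V_j^{il}` (`i < l`) as one family. -/
def noiseB {m : ℕ} {Ω : Type*} (ξ : ℕ → Ω → Fin m → ℝ)
    (V : ℕ → Ω → Fin m → Fin m → ℝ) : ℕ × (Fin m ⊕ Upper m) → Ω → ℝ :=
  fun p ω =>
    match p.2 with
    | Sum.inl i => ξ p.1 ω i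
    | Sum.inr u => V p.1 ω u.1.1 u.1.2



set_option maxHeartbeats 1000000

/-! ### Auxiliary material for the proof -/

def Kxi (a a' : Fin 3) : ℝ := 1 + val3 a * val3 a' + H2 (val3 a) * H2 (val3 a')

def Kco (s s' : Bool) : ℝ := 1 + pm s * pm s'

lemma Kxi_eq (a a' : Fin 3) :
    Kxi a a' = if a = a' then (if a = 1 then (3/2 : ℝ) else 6) else 0 := by
  have h3 : Real.sqrt 3 ^ 2 = 3 := Real.sq_sqrt (by norm_num)
  have h2 : Real.sqrt 2 ^ 2 = 2 := Real.sq_sqrt (by norm_num)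
  have h2ne : Real.sqrt 2 ≠ 0 := by positivity
  fin_cases a <;> fin_cases a' <;>
    norm_num [Kxi, val3, H2, Fin.ext_iff] <;>
    field_simp <;> nlinarith [h3, h2]

lemma Kco_eq (s s' : Bool) : Kco s s' = if s = s' then 2 else 0 := by
  cases s <;> cases s' <;> norm_num [Kco, pm]

def upperEquiv (m : ℕ) : Upper m ≃ Σ j : Fin m, Fin j.val where
  toFun p := ⟨p.1.2, ⟨p.1.1, p.2⟩⟩
  invFun q := ⟨(⟨q.2.1, q.2.2.trans q.1.2⟩, q.1), q.2.2⟩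
  left_inv _ := rfl
  right_inv _ := rfl

lemma card_upper (m : ℕ) : Fintype.card (Upper m) = m * (m - 1) / 2 := by
  rw [Fintype.card_congr (upperEquiv m), Fintype.card_sigma]
  simp only [Fintype.card_fin]
  rw [show (∑ x : Fin m, (x : ℕ)) = ∑ i ∈ range m, i from
    Fin.sum_univ_eq_sum_range (fun i => i) m, Finset.sum_range_id]

lemma sumB {m : ℕ} (u : Upper m → ℝ) :
    ∑ U2 : Finset (Upper m), ∏ p ∈ U2, u p = ∏ p : Upper m, (1 + u p) := by
  have h : ∀ p : Upper m, (1 : ℝ) + u p = u p + 1 := fun p => by ring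
  simp_rw [h]
  rw [Finset.prod_add]
  simp [Finset.powerset_univ]

lemma sumA {m : ℕ} (v h : Fin m → ℝ) :
    (∑ U1 : Finset (Fin m), ∑ K2 ∈ U1.powerset, (∏ r ∈ U1 \ K2, v r) * ∏ r ∈ K2, h r)
      = ∏ i : Fin m, (1 + v i + h i) := by
  have hh : ∀ i : Fin m, 1 + v i + h i = (h i + v i) + 1 := fun i => by ring
  simp_rw [hh]
  rw [Finset.prod_add, ← Finset.powerset_univ]
  refine Finset.sum_congr rfl fun U1 _ => ?_
  rw [Finset.prod_const_one, mul_one, Finset.prod_add]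
  exact Finset.sum_congr rfl fun K2 _ => mul_comm _ _

lemma mycomm {β γ M : Type*} [AddCommMonoid M] (s : Finset β) (t : Finset γ)
    (f : β → γ → M) :
    ∑ x ∈ s, ∑ y ∈ t, f x y = ∑ y ∈ t, ∑ x ∈ s, f x y := Finset.sum_comm

lemma swap3 {β γ δ M : Type*} [AddCommMonoid M] {s : Finset β} {t : Finset γ} {u : Finset δ}
    (f : β → γ → δ → M) :
    ∑ x ∈ s, ∑ d ∈ t, ∑ e ∈ u, f x d e = ∑ d ∈ t, ∑ e ∈ u, ∑ x ∈ s, f x d e :=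
  Finset.sum_comm.trans (Finset.sum_congr rfl fun _ _ => Finset.sum_comm)

lemma reorder {α β γ δ ε : Type*} [Fintype α] [Fintype γ] [Fintype δ] [Fintype ε]
    (g : α → Finset β) (F : α → β → γ → δ → ε → ℝ) :
    (∑ a : α, ∑ c : γ, ∑ b ∈ g a, ∑ d : δ, ∑ e : ε, F a b c d e)
      = ∑ d : δ, ∑ e : ε, ∑ a : α, ∑ c : γ, ∑ b ∈ g a, F a b c d e :=
  calc (∑ a : α, ∑ c : γ, ∑ b ∈ g a, ∑ d : δ, ∑ e : ε, F a b c d e)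
      = ∑ a : α, ∑ c : γ, ∑ d : δ, ∑ e : ε, ∑ b ∈ g a, F a b c d e :=
        Finset.sum_congr rfl fun _ _ => Finset.sum_congr rfl fun _ _ => swap3 _
    _ = ∑ a : α, ∑ d : δ, ∑ e : ε, ∑ c : γ, ∑ b ∈ g a, F a b c d e :=
        Finset.sum_congr rfl fun _ _ => swap3 _
    _ = ∑ d : δ, ∑ e : ε, ∑ a : α, ∑ c : γ, ∑ b ∈ g a, F a b c d e := swap3 _

def cst (m : ℕ) : ℝ := ((2:ℝ) ^ (m * (m - 1) / 2))⁻¹ * ((6:ℝ) ^ m)⁻¹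

def wgt {m : ℕ} (y' : Fin m → Fin 3) : ℝ :=
  (4:ℝ) ^ ((Finset.univ.filter fun i => y' i = 1).card)

/-- The fully distributed term of the double Fourier expansion. -/
def Tt {m : ℕ} (G : (Fin m → Fin 3) → (Upper m → Bool) → ℝ)
    (y : Fin m → Fin 3) (b : Upper m → Bool)
    (U1 : Finset (Fin m)) (U2 : Finset (Upper m)) (K2 : Finset (Fin m))
    (y' : Fin m → Fin 3) (b' : Upper m → Bool) : ℝ :=
  cst m * wgt y' * G y' b' *
    ((∏ r ∈ U1 \ K2, val3 (y' r) * val3 (y r)) *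
      ∏ r ∈ K2, H2 (val3 (y' r)) * H2 (val3 (y r))) *
    ∏ p ∈ U2, pm (b' p) * pm (b p)

lemma invExpand {m : ℕ} (G : (Fin m → Fin 3) → (Upper m → Bool) → ℝ)
    (y : Fin m → Fin 3) (b : Upper m → Bool)
    (U1 : Finset (Fin m)) (U2 : Finset (Upper m)) (K2 : Finset (Fin m)) :
    ((cst m * ∑ y' : Fin m → Fin 3, ∑ b' : Upper m → Bool,
        wgt y' * ((∏ r ∈ U1 \ K2, val3 (y' r)) * (∏ r ∈ K2, H2 (val3 (y' r))) *
          (∏ p ∈ U2, pm (b' p)) * G y' b'))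
      * (∏ r ∈ U1 \ K2, val3 (y r)) * (∏ r ∈ K2, H2 (val3 (y r))) * ∏ p ∈ U2, pm (b p))
    = ∑ y' : Fin m → Fin 3, ∑ b' : Upper m → Bool, Tt G y b U1 U2 K2 y' b' := by
  simp only [Finset.mul_sum, Finset.sum_mul]
  refine Finset.sum_congr rfl fun y' _ => Finset.sum_congr rfl fun b' _ => ?_
  simp only [Tt, Finset.prod_mul_distrib]
  ring

lemma invKey {m : ℕ} (G : (Fin m → Fin 3) → (Upper m → Bool) → ℝ)
    (y : Fin m → Fin 3) (b : Upper m → Bool) (y' : Fin m → Fin 3) (b' : Upper m → Bool) :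
    (∑ U1 : Finset (Fin m), ∑ U2 : Finset (Upper m), ∑ K2 ∈ U1.powerset, Tt G y b U1 U2 K2 y' b')
      = cst m * wgt y' * G y' b' * (∏ i, Kxi (y' i) (y i)) * ∏ p, Kco (b' p) (b p) := by
  set X : ℝ := cst m * wgt y' * G y' b' with hX
  set A : Finset (Fin m) → Finset (Fin m) → ℝ := fun U1 K2 =>
    (∏ r ∈ U1 \ K2, val3 (y' r) * val3 (y r)) *
      ∏ r ∈ K2, H2 (val3 (y' r)) * H2 (val3 (y r)) with hA
  set B : Finset (Upper m) → ℝ := fun U2 => ∏ p ∈ U2, pm (b' p) * pm (b p) with hB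
  have hAsum : (∑ U1 : Finset (Fin m), ∑ K2 ∈ U1.powerset, A U1 K2)
      = ∏ i, Kxi (y' i) (y i) := by
    rw [hA, sumA (fun i => val3 (y' i) * val3 (y i))
      (fun i => H2 (val3 (y' i)) * H2 (val3 (y i)))]
    simp only [Kxi]
  have hBsum : (∑ U2 : Finset (Upper m), B U2) = ∏ p, Kco (b' p) (b p) := by
    rw [hB, sumB (fun p => pm (b' p) * pm (b p))]
    simp only [Kco]
  calc (∑ U1 : Finset (Fin m), ∑ U2 : Finset (Upper m), ∑ K2 ∈ U1.powerset,
        Tt G y b U1 U2 K2 y' b')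
      = ∑ U1 : Finset (Fin m), ∑ U2 : Finset (Upper m),
          (X * B U2) * ∑ K2 ∈ U1.powerset, A U1 K2 :=
        Finset.sum_congr rfl fun U1 _ => Finset.sum_congr rfl fun U2 _ => by
          rw [Finset.mul_sum]
          exact Finset.sum_congr rfl fun K2 _ => by
            simp only [Tt, hX, hA, hB]; ring
    _ = ∑ U1 : Finset (Fin m),
          (X * ∑ U2 : Finset (Upper m), B U2) * ∑ K2 ∈ U1.powerset, A U1 K2 :=
        Finset.sum_congr rfl fun U1 _ => by
          rw [← Finset.sum_mul, ← Finset.mul_sum]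
    _ = (X * ∑ U2 : Finset (Upper m), B U2) *
          ∑ U1 : Finset (Fin m), ∑ K2 ∈ U1.powerset, A U1 K2 := by
        rw [← Finset.mul_sum]
    _ = X * (∏ i, Kxi (y' i) (y i)) * ∏ p, Kco (b' p) (b p) := by
        rw [hAsum, hBsum]; ring

lemma invCollapse {m : ℕ} (G : (Fin m → Fin 3) → (Upper m → Bool) → ℝ)
    (y : Fin m → Fin 3) (b : Upper m → Bool) :
    (∑ y' : Fin m → Fin 3, ∑ b' : Upper m → Bool,
      cst m * wgt y' * G y' b' * (∏ i, Kxi (y' i) (y i)) * ∏ p, Kco (b' p) (b p))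
      = G y b := by
  rw [Finset.sum_eq_single_of_mem y (Finset.mem_univ y)]
  · rw [Finset.sum_eq_single_of_mem b (Finset.mem_univ b)]
    · have hKco : (∏ p : Upper m, Kco (b p) (b p)) = (2:ℝ) ^ (m * (m - 1) / 2) := by
        have h2 : ∀ p : Upper m, Kco (b p) (b p) = 2 := fun p => by rw [Kco_eq, if_pos rfl]
        rw [Finset.prod_congr rfl fun p _ => h2 p, Finset.prod_const, Finset.card_univ,
          card_upper]
      have hKxi : wgt y * (∏ i, Kxi (y i) (y i)) = (6:ℝ) ^ m := by
        have hw4 : wgt y = ∏ i : Fin m, (if y i = 1 then (4:ℝ) else 1) := by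
          rw [wgt, ← Finset.prod_filter, Finset.prod_const]
        rw [hw4, ← Finset.prod_mul_distrib]
        rw [show ((6:ℝ)^m) = ∏ _i : Fin m, (6:ℝ) by
          rw [Finset.prod_const, Finset.card_univ, Fintype.card_fin]]
        refine Finset.prod_congr rfl fun i _ => ?_
        rw [Kxi_eq, if_pos rfl]
        by_cases h : y i = 1 <;> simp [h] <;> norm_num
      have h2ne : ((2:ℝ) ^ (m * (m - 1) / 2)) ≠ 0 := by positivity
      have h6ne : ((6:ℝ) ^ m) ≠ 0 := by positivity
      calc cst m * wgt y * G y b * (∏ i, Kxi (y i) (y i)) * ∏ p, Kco (b p) (b p)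
          = (((6:ℝ) ^ m)⁻¹ * (wgt y * ∏ i, Kxi (y i) (y i))) *
              ((((2:ℝ) ^ (m * (m - 1) / 2))⁻¹) * ∏ p, Kco (b p) (b p)) * G y b := by
            rw [cst]; ring
        _ = G y b := by
            rw [hKxi, hKco, inv_mul_cancel₀ h6ne, inv_mul_cancel₀ h2ne]; ring
    · intro b' _ hne
      obtain ⟨p, hp⟩ := Function.ne_iff.1 hne
      have h0 : (∏ p : Upper m, Kco (b' p) (b p)) = 0 :=
        Finset.prod_eq_zero (Finset.mem_univ p) (by rw [Kco_eq, if_neg hp])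
      rw [h0, mul_zero]
  · intro y' _ hne
    obtain ⟨i, hi⟩ := Function.ne_iff.1 hne
    refine Finset.sum_eq_zero fun b' _ => ?_
    have h0 : (∏ i, Kxi (y' i) (y i)) = 0 :=
      Finset.prod_eq_zero (Finset.mem_univ i) (by rw [Kxi_eq, if_neg hi])
    rw [h0, mul_zero, zero_mul]

/-- Discrete Fourier inversion for the noise basis. -/
lemma inversion {m : ℕ} (G : (Fin m → Fin 3) → (Upper m → Bool) → ℝ)
    (y : Fin m → Fin 3) (b : Upper m → Bool) :
    (∑ U1 : Finset (Fin m), ∑ U2 : Finset (Upper m), ∑ K2 ∈ U1.powerset,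
      ((cst m * ∑ y' : Fin m → Fin 3, ∑ b' : Upper m → Bool,
          wgt y' * ((∏ r ∈ U1 \ K2, val3 (y' r)) * (∏ r ∈ K2, H2 (val3 (y' r))) *
            (∏ p ∈ U2, pm (b' p)) * G y' b'))
        * (∏ r ∈ U1 \ K2, val3 (y r)) * (∏ r ∈ K2, H2 (val3 (y r))) * ∏ p ∈ U2, pm (b p)))
    = G y b := by
  refine Eq.trans (Finset.sum_congr rfl fun U1 _ => Finset.sum_congr rfl fun U2 _ =>
    Finset.sum_congr rfl fun K2 _ => invExpand G y b U1 U2 K2) ?_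
  refine Eq.trans (reorder (fun U1 : Finset (Fin m) => U1.powerset)
    (fun (U1 K2 : Finset (Fin m)) (U2 : Finset (Upper m)) (y' : Fin m → Fin 3)
      (b' : Upper m → Bool) => Tt G y b U1 U2 K2 y' b')) ?_
  refine Eq.trans (Finset.sum_congr rfl fun y' _ => Finset.sum_congr rfl fun b' _ =>
    invKey G y b y' b') ?_
  exact invCollapse G y b

/-- The one-step martingale identity. -/
lemma keyId {d m : ℕ}
    (Φ : (Fin d → ℝ) → (Fin m → ℝ) → (Fin m → Fin m → ℝ) → Fin d → ℝ)
    (f : (Fin d → ℝ) → ℝ) (k : ℕ) (x : Fin d → ℝ)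
    (y : Fin m → Fin 3) (b : Upper m → Bool) :
    qB Φ f (k+1) x +
      (∑ U1 : Finset (Fin m),
        ∑ U2 ∈ (Finset.univ : Finset (Finset (Upper m))).filter
            (fun U2 => U1.Nonempty ∨ U2.Nonempty),
          ∑ K2 ∈ U1.powerset,
            aB Φ f k U1 K2 U2 x * (∏ r ∈ U1 \ K2, val3 (y r)) *
              (∏ r ∈ K2, H2 (val3 (y r))) * ∏ p ∈ U2, pm (b p))
      = qB Φ f k (Φ x (fun i => val3 (y i)) (zmat b)) := by
  classical
  set F : Finset (Fin m) → Finset (Upper m) → ℝ := fun U1 U2 =>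
    ∑ K2 ∈ U1.powerset,
      aB Φ f k U1 K2 U2 x * (∏ r ∈ U1 \ K2, val3 (y r)) *
        (∏ r ∈ K2, H2 (val3 (y r))) * ∏ p ∈ U2, pm (b p) with hF
  have hneg : ∀ U1 : Finset (Fin m),
      (∑ U2 ∈ (Finset.univ : Finset (Finset (Upper m))).filter
          (fun U2 => ¬(U1.Nonempty ∨ U2.Nonempty)), F U1 U2)
        = if U1 = ∅ then F ∅ ∅ else 0 := by
    intro U1
    by_cases h : U1 = ∅
    · subst h
      have he : (Finset.univ : Finset (Finset (Upper m))).filter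
          (fun U2 => ¬((∅ : Finset (Fin m)).Nonempty ∨ U2.Nonempty)) = {∅} := by
        ext U2; simp [Finset.nonempty_iff_ne_empty]
      rw [he, Finset.sum_singleton, if_pos rfl]
    · have he : (Finset.univ : Finset (Finset (Upper m))).filter
          (fun U2 => ¬(U1.Nonempty ∨ U2.Nonempty)) = ∅ := by
        ext U2; simp [Finset.nonempty_iff_ne_empty, h]
      rw [he, Finset.sum_empty, if_neg h]
  have hF00 : F ∅ ∅ = qB Φ f (k+1) x := by
    rw [hF]
    simp only [Finset.powerset_empty, Finset.sum_singleton, Finset.sdiff_empty,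
      Finset.prod_empty, mul_one]
    show aB Φ f k ∅ ∅ ∅ x = qB Φ f (k+1) x
    simp only [aB, qB, Finset.sdiff_empty, Finset.prod_empty, mul_one, one_mul]
  have hsum0 : (∑ U1 : Finset (Fin m), if U1 = ∅ then F ∅ ∅ else 0) = qB Φ f (k+1) x := by
    rw [Finset.sum_ite_eq' Finset.univ (∅ : Finset (Fin m)) (fun _ => F ∅ ∅)]
    simp [hF00]
  have hfull : qB Φ f (k+1) x +
      (∑ U1 : Finset (Fin m),
        ∑ U2 ∈ (Finset.univ : Finset (Finset (Upper m))).filter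
          (fun U2 => U1.Nonempty ∨ U2.Nonempty), F U1 U2)
      = ∑ U1 : Finset (Fin m), ∑ U2 : Finset (Upper m), F U1 U2 := by
    rw [← hsum0, ← Finset.sum_add_distrib]
    refine Finset.sum_congr rfl fun U1 _ => ?_
    rw [← hneg U1, add_comm]
    exact Finset.sum_filter_add_sum_filter_not _ _ _
  rw [hF] at hfull
  rw [hfull]
  have hinv := inversion
    (fun y' b' => qB Φ f k (Φ x (fun i => val3 (y' i)) (zmat b'))) y b
  simp only [cst, wgt] at hinv
  simp only [aB]
  exact hinv

lemma variance_ae_const {Ω : Type*} [MeasurableSpace Ω] (P : Measure Ω)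
    [IsProbabilityMeasure P] {X : Ω → ℝ} {c : ℝ} (h : X =ᵐ[P] fun _ => c) :
    variance X P = 0 := by
  have hint : P[X] = c := by
    rw [integral_congr_ae h, integral_const]; simp
  have he : evariance X P = 0 := by
    rw [evariance]
    have h0 : (fun ω => ‖X ω - P[X]‖ₑ ^ 2) =ᵐ[P] fun _ => 0 := by
      filter_upwards [h] with ω hω
      rw [hω, hint]; simp
    rw [lintegral_congr_ae h0, lintegral_zero]
  simp [variance, he]

lemma telesum (g : ℕ → ℝ) (n : ℕ) :
    ∑ j ∈ Finset.Icc 1 n, (g j - g (j - 1)) = g n - g 0 := by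
  induction n with
  | zero => simp
  | succ n ih =>
    rw [Finset.sum_Icc_succ_top (by omega), ih]
    simp

lemma xi_ae_mem {Ω : Type*} [MeasurableSpace Ω] (P : Measure Ω) [IsProbabilityMeasure P]
    (g : Ω → ℝ) (hg : Measurable g) (hd : Measure.map g P = xiLaw) :
    ∀ᵐ ω ∂P, g ω = -Real.sqrt 3 ∨ g ω = 0 ∨ g ω = Real.sqrt 3 := by
  set S : Set ℝ := {-Real.sqrt 3, 0, Real.sqrt 3} with hS
  have hSm : MeasurableSet S :=
    ((measurableSet_singleton (Real.sqrt 3)).insert 0).insert (-Real.sqrt 3)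
  have hz : P (g ⁻¹' Sᶜ) = 0 := by
    rw [← Measure.map_apply hg hSm.compl, hd]
    have hdir : ∀ x : ℝ, x ∈ S → Measure.dirac x Sᶜ = 0 := fun x hx => by
      rw [Measure.dirac_apply' _ hSm.compl]
      simp [Set.indicator_apply, hx]
    simp only [xiLaw, Measure.coe_add, Pi.add_apply, Measure.smul_apply, smul_eq_mul]
    rw [hdir _ (by simp [hS]), hdir _ (by simp [hS]), hdir _ (by simp [hS])]
    simp
  have hae : ∀ᵐ ω ∂P, g ω ∈ S := by
    rw [ae_iff]
    convert hz using 2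
    rfl
  filter_upwards [hae] with ω hω
  simpa [hS] using hω

lemma coin_ae_mem {Ω : Type*} [MeasurableSpace Ω] (P : Measure Ω) [IsProbabilityMeasure P]
    (g : Ω → ℝ) (hg : Measurable g) (hd : Measure.map g P = coinLaw) :
    ∀ᵐ ω ∂P, g ω = 1 ∨ g ω = -1 := by
  set S : Set ℝ := {1, -1} with hS
  have hSm : MeasurableSet S := (measurableSet_singleton (-1 : ℝ)).insert 1
  have hz : P (g ⁻¹' Sᶜ) = 0 := by
    rw [← Measure.map_apply hg hSm.compl, hd]
    have hdir : ∀ x : ℝ, x ∈ S → Measure.dirac x Sᶜ = 0 := fun x hx => by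
      rw [Measure.dirac_apply' _ hSm.compl]
      simp [Set.indicator_apply, hx]
    simp only [coinLaw, Measure.coe_add, Pi.add_apply, Measure.smul_apply, smul_eq_mul]
    rw [hdir _ (by simp [hS]), hdir _ (by simp [hS])]
    simp
  have hae : ∀ᵐ ω ∂P, g ω ∈ S := by
    rw [ae_iff]
    convert hz using 2
    rfl
  filter_upwards [hae] with ω hω
  simpa [hS] using hω


/-- The control variate
`M^{(2)}_{Δ,T} = Σ_{j=1}^J Σ_{(U_1,U_2)∈𝒜} Σ_{o∈{1,2}^{U_1}}
a_{j,o,U_1,U_2}(X_{Δ,(j-1)Δ}) Π_{r∈U_1} H_{o_r}(ξ_j^r) Π_{(k,l)∈U_2} V_j^{kl}`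
(with `o` encoded by `K_2 ⊆ U_1`) satisfies `Var[f(X_{Δ,T}) − M^{(2)}_{Δ,T}] = 0`. -/
theorem stmt5
    {d m : ℕ} (T : ℝ) (hT : 0 < T) (x0 : Fin d → ℝ) (J : ℕ) (hJ : 1 ≤ J)
    {Ω : Type*} [MeasurableSpace Ω] (P : Measure Ω) [IsProbabilityMeasure P]
    (ξ : ℕ → Ω → Fin m → ℝ) (V : ℕ → Ω → Fin m → Fin m → ℝ)
    (hξmeas : ∀ j, Measurable (ξ j)) (hVmeas : ∀ j, Measurable (V j))
    (hindep : iIndepFun (noiseB ξ V) P)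
    (hξdist : ∀ j i, Measure.map (fun ω => ξ j ω i) P = xiLaw)
    (hVdist : ∀ j (u : Upper m),
      Measure.map (fun ω => V j ω u.1.1 u.1.2) P = coinLaw)
    (hVanti : ∀ j ω i l, i < l → V j ω l i = -V j ω i l)
    (hVdiag : ∀ j ω i, V j ω i i = -1)
    (Φ : (Fin d → ℝ) → (Fin m → ℝ) → (Fin m → Fin m → ℝ) → Fin d → ℝ)
    (hΦ : Measurable fun p : (Fin d → ℝ) × (Fin m → ℝ) × (Fin m → Fin m → ℝ) =>
      Φ p.1 p.2.1 p.2.2)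
    (f : (Fin d → ℝ) → ℝ) (hf : Measurable f) :
    variance
      (fun ω => f (XB Φ x0 ξ V J ω)
        - ∑ j ∈ Finset.Icc 1 J, ∑ U1 : Finset (Fin m),
            ∑ U2 ∈ (Finset.univ : Finset (Finset (Upper m))).filter
                (fun U2 => U1.Nonempty ∨ U2.Nonempty),
              ∑ K2 ∈ U1.powerset,
                aB Φ f (J - j) U1 K2 U2 (XB Φ x0 ξ V (j - 1) ω)
                  * (∏ r ∈ U1 \ K2, ξ j ω r) * (∏ r ∈ K2, H2 (ξ j ω r))
                  * ∏ p ∈ U2, V j ω p.1.1 p.1.2) P = 0 := by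
  classical
  have hxiall : ∀ᵐ ω ∂P, ∀ j, ∀ i : Fin m,
      ξ j ω i = -Real.sqrt 3 ∨ ξ j ω i = 0 ∨ ξ j ω i = Real.sqrt 3 := by
    rw [MeasureTheory.ae_all_iff]
    intro j
    rw [MeasureTheory.ae_all_iff]
    intro i
    exact xi_ae_mem P _ ((measurable_pi_apply i).comp (hξmeas j)) (hξdist j i)
  have hVall : ∀ᵐ ω ∂P, ∀ j, ∀ u : Upper m,
      V j ω u.1.1 u.1.2 = 1 ∨ V j ω u.1.1 u.1.2 = -1 := by
    rw [MeasureTheory.ae_all_iff]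
    intro j
    rw [MeasureTheory.ae_all_iff]
    intro u
    exact coin_ae_mem P _ (Measurable.eval (Measurable.eval (hVmeas j))) (hVdist j u)
  apply variance_ae_const P (c := qB Φ f J x0)
  filter_upwards [hxiall, hVall] with ω hξω hVω
  have hstep : ∀ j ∈ Finset.Icc 1 J,
      (∑ U1 : Finset (Fin m),
        ∑ U2 ∈ (Finset.univ : Finset (Finset (Upper m))).filter
            (fun U2 => U1.Nonempty ∨ U2.Nonempty),
          ∑ K2 ∈ U1.powerset,
            aB Φ f (J - j) U1 K2 U2 (XB Φ x0 ξ V (j - 1) ω)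
              * (∏ r ∈ U1 \ K2, ξ j ω r) * (∏ r ∈ K2, H2 (ξ j ω r))
              * ∏ p ∈ U2, V j ω p.1.1 p.1.2)
      = qB Φ f (J - j) (XB Φ x0 ξ V j ω)
          - qB Φ f (J - (j - 1)) (XB Φ x0 ξ V (j - 1) ω) := by
    intro j hj
    rw [Finset.mem_Icc] at hj
    obtain ⟨j', rfl⟩ : ∃ j', j = j' + 1 := ⟨j - 1, by omega⟩
    set yv : Fin m → Fin 3 := fun i =>
      if ξ (j' + 1) ω i = Real.sqrt 3 then 2
      else if ξ (j' + 1) ω i = 0 then 1 else 0 with hyv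
    set bv : Upper m → Bool := fun u =>
      if V (j' + 1) ω u.1.1 u.1.2 = 1 then true else false with hbv
    have hs3 : (0:ℝ) < Real.sqrt 3 := Real.sqrt_pos.mpr (by norm_num)
    have hy : ∀ i, val3 (yv i) = ξ (j' + 1) ω i := by
      intro i
      rcases hξω (j' + 1) i with h | h | h
      · have h1 : ξ (j' + 1) ω i ≠ Real.sqrt 3 := by rw [h]; intro hc; linarith
        have h2 : ξ (j' + 1) ω i ≠ 0 := by
          rw [h]; intro hc; rw [neg_eq_zero] at hc; linarith
        have hv : yv i = 0 := by simp only [hyv]; rw [if_neg h1, if_neg h2]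
        rw [hv, h]; rfl
      · have h1 : ξ (j' + 1) ω i ≠ Real.sqrt 3 := by rw [h]; intro hc; linarith
        have hv : yv i = 1 := by simp only [hyv]; rw [if_neg h1, if_pos h]
        rw [hv, h]; rfl
      · have hv : yv i = 2 := by simp only [hyv]; rw [if_pos h]
        rw [hv, h]; rfl
    have hbV : ∀ p : Upper m, V (j' + 1) ω p.1.1 p.1.2 = pm (bv p) := by
      intro p
      rcases hVω (j' + 1) p with h | h
      · have hv : bv p = true := by simp only [hbv]; rw [if_pos h]
        rw [hv, h]; rfl
      · have hne : V (j' + 1) ω p.1.1 p.1.2 ≠ 1 := by rw [h]; norm_num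
        have hv : bv p = false := by simp only [hbv]; rw [if_neg hne]
        rw [hv, h]; rfl
    have hzm : ∀ i l, zmat bv i l = V (j' + 1) ω i l := by
      intro i l
      rcases lt_trichotomy i l with h | h | h
      · simp only [zmat, dif_pos h]
        exact (hbV ⟨(i, l), h⟩).symm
      · subst h
        simp only [zmat, dif_neg (lt_irrefl i)]
        exact (hVdiag (j' + 1) ω i).symm
      · simp only [zmat, dif_neg (not_lt.2 h.le), dif_pos h]
        rw [← hbV ⟨(l, i), h⟩, hVanti (j' + 1) ω l i h]
    have hxieq : ξ (j' + 1) ω = fun i => val3 (yv i) := funext fun i => (hy i).symm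
    have hVeq : V (j' + 1) ω = zmat bv := funext fun i => funext fun l => (hzm i l).symm
    have hXB : XB Φ x0 ξ V (j' + 1) ω
        = Φ (XB Φ x0 ξ V j' ω) (fun i => val3 (yv i)) (zmat bv) := by
      show Φ (XB Φ x0 ξ V j' ω) (ξ (j' + 1) ω) (V (j' + 1) ω) = _
      rw [hxieq, hVeq]
    have hk : J - j' = (J - (j' + 1)) + 1 := by omega
    simp only [Nat.add_sub_cancel]
    rw [hXB, hk]
    rw [eq_sub_iff_add_eq, add_comm]
    have hkey := keyId Φ f (J - (j' + 1)) (XB Φ x0 ξ V j' ω) yv bv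
    simp only [hxieq, hbV]
    exact hkey
  rw [Finset.sum_congr rfl hstep,
    telesum (fun j => qB Φ f (J - j) (XB Φ x0 ξ V j ω)) J]
  simp only [Nat.sub_self, Nat.sub_zero]
  show f (XB Φ x0 ξ V J ω) - (qB Φ f 0 (XB Φ x0 ξ V J ω) - qB Φ f J (XB Φ x0 ξ V 0 ω))
      = qB Φ f J x0
  have h0 : qB Φ f 0 (XB Φ x0 ξ V J ω) = f (XB Φ x0 ξ V J ω) := rfl
  have h1 : XB Φ x0 ξ V 0 ω = x0 := rfl
  rw [h0, h1]
  ring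


end
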